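/- Let Y be a closed subspace of a Banach space X. The following are equivalent: (a) B_Y has the 1½-ball property in X; (b) for all x ∈ X and y ∈ B_Y, d(y, P_{B_Y}(x)) = ‖y − x‖ − d(x, B_Y). -/
import Mathlib


/-- For a closed subspace `Y` of a Banach space `X` with `B_Y` proximinal,
the following are equivalent: (a) `B_Y` has the 1½-ball property in `X`; (b) for all
`x ∈ X` and `y ∈ B_Y`, `d(y, P_{B_Y}(x)) = ‖y − x‖ − d(x, B_Y)`. -/
theorem stmt_11 {X : Type*} [NormedAddCommGroup X] [NormedSpace ℝ X] [CompleteSpace X]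
    (Y : Subspace ℝ X) (hYcl : IsClosed (Y : Set X))
    (hprox : ∀ x : X, {z : X | (z ∈ Y ∧ ‖z‖ ≤ 1) ∧
      ‖x - z‖ = Metric.infDist x {w : X | w ∈ Y ∧ ‖w‖ ≤ 1}}.Nonempty) :
    (∀ (x y : X) (r₁ r₂ : ℝ), 0 < r₁ → 0 < r₂ →
      y ∈ {z : X | z ∈ Y ∧ ‖z‖ ≤ 1} →
      (Metric.closedBall x r₁ ∩ {z : X | z ∈ Y ∧ ‖z‖ ≤ 1}).Nonempty →
      ‖x - y‖ < r₁ + r₂ →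
      (Metric.closedBall x r₁ ∩ Metric.closedBall y r₂ ∩ {z : X | z ∈ Y ∧ ‖z‖ ≤ 1}).Nonempty)
    ↔
    (∀ x y : X, y ∈ Y → ‖y‖ ≤ 1 →
      Metric.infDist y {z : X | (z ∈ Y ∧ ‖z‖ ≤ 1) ∧
        ‖x - z‖ = Metric.infDist x {w : X | w ∈ Y ∧ ‖w‖ ≤ 1}} =
      ‖y - x‖ - Metric.infDist x {w : X | w ∈ Y ∧ ‖w‖ ≤ 1}) := by
  set B : Set X := {z : X | z ∈ Y ∧ ‖z‖ ≤ 1} with hBdef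
  have hBcl : IsClosed B := by
    have : B = (Y : Set X) ∩ Metric.closedBall 0 1 := by
      ext z
      simp [hBdef, Metric.mem_closedBall, dist_zero_right]
    rw [this]
    exact hYcl.inter Metric.isClosed_closedBall
  have hB0 : (0 : X) ∈ B := ⟨Y.zero_mem, by simp⟩
  constructor
  · -- (a) ⇒ (b)
    intro ha x y hyY hy1
    set d := Metric.infDist x B with hd
    set P : Set X := {z : X | (z ∈ Y ∧ ‖z‖ ≤ 1) ∧ ‖x - z‖ = d} with hPdef
    have hPne : P.Nonempty := hprox x
    have hd0 : 0 ≤ d := Metric.infDist_nonneg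
    have hdxy : d ≤ ‖x - y‖ := by
      have h : Metric.infDist x B ≤ dist x y :=
        Metric.infDist_le_dist_of_mem (show y ∈ B from ⟨hyY, hy1⟩)
      rwa [dist_eq_norm] at h
    have hlow : ‖y - x‖ - d ≤ Metric.infDist y P := by
      by_contra h
      push_neg at h
      obtain ⟨z, hzP, hdz⟩ := (Metric.infDist_lt_iff hPne).mp h
      have ht := dist_triangle y z x
      simp only [dist_eq_norm] at ht
      rw [dist_eq_norm] at hdz
      have hzx : ‖z - x‖ = d := by rw [norm_sub_rev]; exact hzP.2
      linarith
    have hup : Metric.infDist y P ≤ ‖y - x‖ - d := by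
      rcases eq_or_lt_of_le hd0 with h0 | hpos
      · have hxB : x ∈ B := (hBcl.mem_iff_infDist_zero ⟨0, hB0⟩).mpr h0.symm
        have hxP : x ∈ P := ⟨hxB, by simp [← h0]⟩
        have h6 : Metric.infDist y P ≤ dist y x := Metric.infDist_le_dist_of_mem hxP
        rw [dist_eq_norm] at h6
        linarith
      · apply le_of_forall_pos_le_add
        intro ε hε
        obtain ⟨z₀, hz₀⟩ := hprox x
        have hball : (Metric.closedBall x d ∩ B).Nonempty := by
          refine ⟨z₀, ?_, hz₀.1⟩
          rw [Metric.mem_closedBall, dist_comm, dist_eq_norm]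
          exact le_of_eq hz₀.2
        have hr2 : 0 < ‖x - y‖ - d + ε := by linarith
        obtain ⟨z, hz⟩ := ha x y d (‖x - y‖ - d + ε) hpos hr2 ⟨hyY, hy1⟩ hball (by linarith)
        have hz1 : dist z x ≤ d := hz.1.1
        have hz2 : dist z y ≤ ‖x - y‖ - d + ε := hz.1.2
        have hzB : z ∈ B := hz.2
        have hxz : ‖x - z‖ = d := by
          refine le_antisymm (by rwa [← dist_eq_norm, dist_comm]) ?_
          have h7 : Metric.infDist x B ≤ dist x z := Metric.infDist_le_dist_of_mem hzB
          rwa [dist_eq_norm] at h7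
        have hzP : z ∈ P := ⟨hzB, hxz⟩
        have h1 : Metric.infDist y P ≤ dist y z := Metric.infDist_le_dist_of_mem hzP
        rw [dist_comm] at hz2
        rw [dist_eq_norm] at h1 hz2
        have : ‖y - x‖ = ‖x - y‖ := norm_sub_rev y x
        linarith
    linarith
  · -- (b) ⇒ (a)
    intro hb x y r₁ r₂ hr₁ hr₂ hyB hne hlt
    set d := Metric.infDist x B with hd
    set P : Set X := {z : X | (z ∈ Y ∧ ‖z‖ ≤ 1) ∧ ‖x - z‖ = d} with hPdef
    have hPne : P.Nonempty := hprox x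
    have heq := hb x y hyB.1 hyB.2
    obtain ⟨w₀, hw₀⟩ := hne
    have hdr₁ : d ≤ r₁ := by
      have h1 : Metric.infDist x B ≤ dist x w₀ := Metric.infDist_le_dist_of_mem hw₀.2
      have h2 : dist x w₀ ≤ r₁ := by rw [dist_comm]; exact hw₀.1
      linarith
    have hd0 : 0 ≤ d := Metric.infDist_nonneg
    set ε := (r₁ + r₂ - ‖x - y‖) / 2 with hε
    have hεpos : 0 < ε := by rw [hε]; linarith
    have hlt' : Metric.infDist y P < ‖y - x‖ - d + ε := by rw [heq]; linarith
    obtain ⟨z, hzP, hdz⟩ := (Metric.infDist_lt_iff hPne).mp hlt'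
    have hxz : ‖x - z‖ = d := hzP.2
    have hzB : z ∈ B := hzP.1
    by_cases hcase : dist z y ≤ r₂
    · refine ⟨z, ⟨?_, hcase⟩, hzB⟩
      rw [Metric.mem_closedBall, dist_eq_norm, ← norm_sub_rev x z, hxz]
      exact le_trans (le_of_eq rfl) hdr₁
    · push_neg at hcase
      set s := ‖y - z‖ with hs
      have hs_eq : dist y z = s := dist_eq_norm y z
      have hspos : 0 < s := by
        rw [← hs_eq]; rw [dist_comm]; exact lt_trans hr₂ hcase
      have hsr₂ : r₂ < s := by rw [← hs_eq, dist_comm]; exact hcase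
      set t := 1 - r₂ / s with htdef
      have ht0 : 0 ≤ t := by
        rw [htdef]
        have : r₂ / s ≤ 1 := by
          rw [div_le_one hspos]; exact le_of_lt hsr₂
        linarith
      have ht1 : t ≤ 1 := by
        rw [htdef]
        have : 0 ≤ r₂ / s := div_nonneg (le_of_lt hr₂) (le_of_lt hspos)
        linarith
      have hts : t * s = s - r₂ := by
        rw [htdef]; field_simp
      set w := z + t • (y - z) with hwdef
      have hw_conv : w = (1 - t) • z + t • y := by
        rw [hwdef]; module
      have hwY : w ∈ Y := by
        rw [hw_conv]
        exact Y.add_mem (Y.smul_mem _ hzB.1) (Y.smul_mem _ hyB.1)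
      have hwnorm : ‖w‖ ≤ 1 := by
        rw [hw_conv]
        calc ‖(1 - t) • z + t • y‖ ≤ ‖(1 - t) • z‖ + ‖t • y‖ := norm_add_le _ _
          _ = (1 - t) * ‖z‖ + t * ‖y‖ := by
              rw [norm_smul, norm_smul, Real.norm_of_nonneg (by linarith),
                Real.norm_of_nonneg ht0]
          _ ≤ (1 - t) * 1 + t * 1 := by
              have e1 : (1 - t) * ‖z‖ ≤ (1 - t) * 1 :=
                mul_le_mul_of_nonneg_left hzB.2 (by linarith)
              have e2 : t * ‖y‖ ≤ t * 1 := mul_le_mul_of_nonneg_left hyB.2 ht0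
              linarith
          _ = 1 := by ring
      have hyw : ‖y - w‖ = r₂ := by
        have : y - w = (1 - t) • (y - z) := by rw [hwdef]; module
        rw [this, norm_smul, Real.norm_of_nonneg (by linarith), ← hs]
        rw [sub_mul, one_mul, hts]; ring
      have hxw : ‖x - w‖ ≤ r₁ := by
        have hdecomp : x - w = (1 - t) • (x - z) + t • (x - y) := by rw [hwdef]; module
        have h1 : ‖x - w‖ ≤ (1 - t) * d + t * ‖x - y‖ := by
          rw [hdecomp]
          calc ‖(1 - t) • (x - z) + t • (x - y)‖
              ≤ ‖(1 - t) • (x - z)‖ + ‖t • (x - y)‖ := norm_add_le _ _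
            _ = (1 - t) * ‖x - z‖ + t * ‖x - y‖ := by
                rw [norm_smul, norm_smul, Real.norm_of_nonneg (by linarith),
                  Real.norm_of_nonneg ht0]
            _ = (1 - t) * d + t * ‖x - y‖ := by rw [hxz]
        have htri : ‖x - y‖ ≤ d + s := by
          have h := norm_sub_le_norm_sub_add_norm_sub x z y
          rw [hxz] at h
          rw [hs, norm_sub_rev y z]
          linarith [h]
        have h2 : t * ‖x - y‖ ≤ t * (d + s) := by
          exact mul_le_mul_of_nonneg_left htri ht0
        have h3 : dist y z < ‖y - x‖ - d + ε := hdz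
        rw [hs_eq] at h3
        have h4 : ‖y - x‖ = ‖x - y‖ := norm_sub_rev y x
        -- ‖x - w‖ ≤ (1-t)d + t(d+s) = d + ts = d + s - r₂ < d + ‖x-y‖ - d + ε - r₂
        have h5 : ‖x - w‖ ≤ d + (s - r₂) := by
          have := hts
          nlinarith [h1, h2]
        linarith [h5, h3, h4, hε, hlt]
      refine ⟨w, ⟨?_, ?_⟩, hwY, hwnorm⟩
      · rw [Metric.mem_closedBall, dist_eq_norm, norm_sub_rev]; exact hxw
      · rw [Metric.mem_closedBall, dist_eq_norm, norm_sub_rev]; exact le_of_eq hyw
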